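/- For every $m \ge 0$, the primitive $2^{m+2}$-th root of unity $\zeta_{2^{m+2}} = e^{-i\pi/2^{m+1}}$ is not a relative norm of the extension $\mathbb{K}/\mathbb{F}$, where $\mathbb{F} = \mathbb{Q}(\zeta_{2^{m+2}})$ and $\mathbb{K} = \mathbb{F}(\sqrt{5})$: there is no $x \in \mathbb{K}$ with $N_{\mathbb{K}/\mathbb{F}}(x) = \zeta_{2^{m+2}}$. -/

import Mathlib

open IntermediateField

open Polynomial in
instance fact_prime_five' : Fact (Nat.Prime 5) := ⟨by norm_num⟩

/-- The root of unity `ζ_{2^{m+2}} = e^{-iπ/2^{m+1}}`. -/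
noncomputable def zeta2m (m : ℕ) : ℂ :=
  Complex.exp (-((Real.pi : ℂ) * Complex.I) / 2 ^ (m + 1))

section Auxiliary
open Polynomial


lemma zeta_primitive (m : ℕ) : IsPrimitiveRoot (zeta2m m) (2 ^ (m + 2)) := by
  have h := Complex.isPrimitiveRoot_exp (2 ^ (m + 2)) (by positivity)
  have : zeta2m m = (Complex.exp (2 * Real.pi * Complex.I / (2 ^ (m + 2) : ℕ)))⁻¹ := by
    rw [← Complex.exp_neg, zeta2m]
    congr 1
    have : ((2 ^ (m + 2) : ℕ) : ℂ) = 2 ^ (m + 2) := by push_cast; ring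
    rw [this]
    rw [neg_div, neg_eq_iff_eq_neg, neg_neg, div_eq_div_iff (by norm_num) (by norm_num)]
    ring
  rw [this]
  exact h.inv

lemma zeta_minpoly (m : ℕ) : minpoly ℚ (zeta2m m) = X ^ (2 ^ (m + 1)) + 1 := by
  have h := (Polynomial.cyclotomic_eq_minpoly_rat (zeta_primitive m) (by positivity)).symm
  rw [h]
  have : (2 : ℕ) ^ (m + 2) = 2 ^ ((m + 1) + 1) := by ring
  rw [this, Polynomial.cyclotomic_prime_pow_eq_geom_sum Nat.prime_two]
  simp [Finset.sum_range_succ]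
  ring

lemma exists_denom (P : ℚ[X]) :
    ∃ (d : ℤ) (A : ℤ[X]), d ≠ 0 ∧ C (d : ℚ) * P = A.map (Int.castRingHom ℚ) := by
  induction P using Polynomial.induction_on with
  | C a =>
      refine ⟨(a.den : ℤ), C a.num, by exact_mod_cast a.den_nz, ?_⟩
      rw [Polynomial.map_C, ← Polynomial.C_mul]
      congr 1
      push_cast
      rw [mul_comm]
      exact_mod_cast a.mul_den_eq_num
  | add p q hp hq =>
      obtain ⟨d₁, A₁, hd₁, h₁⟩ := hp
      obtain ⟨d₂, A₂, hd₂, h₂⟩ := hq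
      refine ⟨d₁ * d₂, C d₂ * A₁ + C d₁ * A₂, mul_ne_zero hd₁ hd₂, ?_⟩
      rw [Polynomial.map_add, Polynomial.map_mul, Polynomial.map_mul, Polynomial.map_C,
        Polynomial.map_C, ← h₁, ← h₂]
      simp only [Int.coe_castRingHom, Int.cast_mul, Polynomial.C_mul]
      ring
  | monomial k a ih =>
      obtain ⟨d, A, hd, h⟩ := ih
      refine ⟨d, A * X, hd, ?_⟩
      rw [Polynomial.map_mul, Polynomial.map_X, ← h]
      ring

lemma five_pow_two_pow (k : ℕ) : ∃ u : ℕ, Odd u ∧ 5 ^ (2 ^ k) = 1 + 2 ^ (k + 2) * u := by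
  induction k with
  | zero => exact ⟨1, odd_one, by norm_num⟩
  | succ k ih =>
      obtain ⟨u, hu, h⟩ := ih
      refine ⟨u + 2 ^ (k + 1) * u ^ 2, ?_, ?_⟩
      · exact hu.add_even ((Nat.even_pow.mpr ⟨even_two, by omega⟩).mul_right _)
      · have : 5 ^ 2 ^ (k + 1) = (5 ^ 2 ^ k) ^ 2 := by
          rw [← pow_mul, pow_succ]
        rw [this, h]
        ring

lemma Mmonic (m : ℕ) : (X ^ (2 ^ (m + 1)) + 1 : ℤ[X]).Monic := by
  have : (1 : ℤ[X]) = C 1 := by simp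
  rw [this]
  exact monic_X_pow_add_C _ (by positivity)

lemma zeta_integral (m : ℕ) : IsIntegral ℚ (zeta2m m) := by
  refine ⟨X ^ (2 ^ (m + 1)) + 1, ?_, ?_⟩
  · have : (1 : ℚ[X]) = C 1 := by simp
    rw [this]; exact monic_X_pow_add_C _ (by positivity)
  · rw [← zeta_minpoly m]; exact minpoly.aeval ℚ (zeta2m m)

lemma int_reduction (m : ℕ)
    (h : ∃ y z : ℂ, y ∈ ℚ⟮zeta2m m⟯ ∧ z ∈ ℚ⟮zeta2m m⟯ ∧
      y ^ 2 - 5 * z ^ 2 = zeta2m m) :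
    ∃ (d : ℤ) (A B : ℤ[X]), d ≠ 0 ∧
      (X ^ (2 ^ (m + 1)) + 1 : ℤ[X]) ∣ A ^ 2 - 5 * B ^ 2 - C (d ^ 2) * X := by
  obtain ⟨y, z, hy, hz, heq⟩ := h
  have hmem : ∀ w : ℂ, w ∈ ℚ⟮zeta2m m⟯ → ∃ P : ℚ[X], aeval (zeta2m m) P = w := by
    intro w hw
    rw [← IntermediateField.mem_toSubalgebra,
      IntermediateField.adjoin_simple_toSubalgebra_of_isAlgebraic (zeta_integral m).isAlgebraic,
      Algebra.adjoin_singleton_eq_range_aeval, AlgHom.mem_range] at hw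
    exact hw
  obtain ⟨P, hP⟩ := hmem y hy
  obtain ⟨Q, hQ⟩ := hmem z hz
  set f : ℚ[X] := P ^ 2 - 5 * Q ^ 2 - X with hf
  have hdvd : (X ^ (2 ^ (m + 1)) + 1 : ℚ[X]) ∣ f := by
    rw [← zeta_minpoly m]
    apply minpoly.dvd
    simp only [hf, map_sub, map_pow, map_mul, map_ofNat, aeval_X, hP, hQ]
    rw [heq]
    ring
  obtain ⟨d₁, A₁, hd₁, h₁⟩ := exists_denom P
  obtain ⟨d₂, B₁, hd₂, h₂⟩ := exists_denom Q
  refine ⟨d₁ * d₂, C d₂ * A₁, C d₁ * B₁, mul_ne_zero hd₁ hd₂, ?_⟩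
  set g : ℤ[X] := (C d₂ * A₁) ^ 2 - 5 * (C d₁ * B₁) ^ 2 - C ((d₁ * d₂) ^ 2) * X with hg
  have hmapg : g.map (Int.castRingHom ℚ) = C (((d₁ * d₂ : ℤ) : ℚ) ^ 2) * f := by
    have e₁ : (C d₂ * A₁).map (Int.castRingHom ℚ) = C ((d₂ : ℚ)) * (C (d₁ : ℚ) * P) := by
      rw [Polynomial.map_mul, Polynomial.map_C, h₁]; simp
    have e₂ : (C d₁ * B₁).map (Int.castRingHom ℚ) = C ((d₁ : ℚ)) * (C (d₂ : ℚ) * Q) := by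
      rw [Polynomial.map_mul, Polynomial.map_C, h₂]; simp
    rw [hg, hf]
    simp only [Polynomial.map_sub, Polynomial.map_mul, Polynomial.map_pow, Polynomial.map_C,
      Polynomial.map_X, Polynomial.map_ofNat, e₁, e₂, Int.coe_castRingHom]
    push_cast
    simp only [Polynomial.C_mul, Polynomial.C_pow]
    ring
  have : (X ^ (2 ^ (m + 1)) + 1 : ℚ[X]) ∣ g.map (Int.castRingHom ℚ) := by
    rw [hmapg]; exact Dvd.dvd.mul_left hdvd _
  have hmapM : ((X ^ (2 ^ (m + 1)) + 1 : ℤ[X]).map (Int.castRingHom ℚ))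
      = (X ^ (2 ^ (m + 1)) + 1 : ℚ[X]) := by
    simp
  rw [← hmapM] at this
  exact (map_dvd_map (Int.castRingHom ℚ) (by exact Int.cast_injective)
    (Mmonic m)).mp this

lemma base_case (m : ℕ) (d : ℤ) (hd5 : ¬ (5:ℤ) ∣ d) (A B : ℤ[X])
    (h : (X ^ (2 ^ (m + 1)) + 1 : ℤ[X]) ∣ A ^ 2 - 5 * B ^ 2 - C (d ^ 2) * X) : False := by
  haveI : Fact (Nat.Prime 5) := ⟨by norm_num⟩
  set F := GaloisField 5 (2 ^ m) with hF
  haveI : DecidableEq F := Classical.decEq F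
  haveI : Fintype F := Fintype.ofFinite F
  have hcard : Fintype.card F = 5 ^ (2 ^ m) := by
    rw [← Nat.card_eq_fintype_card]
    exact GaloisField.card 5 (2 ^ m) (by positivity)
  obtain ⟨u, hu, hq⟩ := five_pow_two_pow m
  have hupos : 0 < u := hu.pos
  -- a generator of Fˣ
  obtain ⟨g, hg⟩ := IsCyclic.exists_generator (α := Fˣ)
  have horder : orderOf g = 2 ^ (m + 2) * u := by
    rw [orderOf_eq_card_of_forall_mem_zpowers hg, Nat.card_eq_fintype_card, Fintype.card_units, hcard, hq]
    omega
  -- ω = g^u satisfies ω^(2^(m+1)) = -1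
  have hτne : g ^ (u * 2 ^ (m + 1)) ≠ 1 := by
    intro hone
    have := orderOf_dvd_of_pow_eq_one hone
    rw [horder] at this
    have hle := Nat.le_of_dvd (by positivity) this
    have : 2 ^ (m + 2) * u > u * 2 ^ (m + 1) := by
      have : 2 ^ (m + 2) = 2 * 2 ^ (m + 1) := by ring
      nlinarith [Nat.pow_pos (n := m + 1) (show 0 < 2 by norm_num)]
    omega
  have hτsq : (g ^ (u * 2 ^ (m + 1))) ^ 2 = 1 := by
    rw [← pow_mul]
    have : u * 2 ^ (m + 1) * 2 = 2 ^ (m + 2) * u := by ring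
    rw [this, ← horder, pow_orderOf_eq_one]
  set ω : F := (g : F) ^ u with hω
  have hωpow : ω ^ (2 ^ (m + 1)) = -1 := by
    have h1 : ((g ^ (u * 2 ^ (m + 1)) : Fˣ) : F) ^ 2 = 1 := by
      rw [← Units.val_pow_eq_pow_val, hτsq, Units.val_one]
    have h2 : ((g ^ (u * 2 ^ (m + 1)) : Fˣ) : F) ≠ 1 := by
      intro hcon
      exact hτne (Units.ext hcon)
    have h1' : ((g ^ (u * 2 ^ (m + 1)) : Fˣ) : F) * ((g ^ (u * 2 ^ (m + 1)) : Fˣ) : F) = 1 := by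
      rw [← sq]; exact h1
    have h3 : ((g ^ (u * 2 ^ (m + 1)) : Fˣ) : F) = -1 :=
      (mul_self_eq_one_iff.mp h1').resolve_left h2
    rw [hω, ← pow_mul, ← h3, Units.val_pow_eq_pow_val]
  have hωne : ω ≠ 0 := by
    rw [hω]
    exact pow_ne_zero _ (Units.ne_zero g)
  -- evaluate
  have h5F : (5 : F) = 0 := by exact_mod_cast CharP.cast_eq_zero F 5
  obtain ⟨k, hk⟩ := h
  have heval : (aeval ω A) ^ 2 - 5 * (aeval ω B) ^ 2 - (d : F) ^ 2 * ω = 0 := by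
    have hcong := congrArg (aeval ω) hk
    simp only [map_sub, map_mul, map_pow, map_ofNat, map_add, map_one, aeval_X, aeval_C,
      algebraMap_int_eq, eq_intCast, Int.cast_pow, map_intCast, hωpow] at hcong
    rw [hcong]
    ring
  have hdne : ((d : ℤ) : F) ≠ 0 := by
    rw [Ne, CharP.intCast_eq_zero_iff F 5 d]
    exact_mod_cast hd5
  set s : F := aeval ω A / ((d : ℤ) : F) with hs
  have hs2 : s ^ 2 = ω := by
    rw [hs, div_pow]
    rw [div_eq_iff (pow_ne_zero 2 hdne)]
    linear_combination heval + (aeval ω B) ^ 2 * h5F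
  have hsne : s ≠ 0 := by
    intro h0
    rw [h0] at hs2
    exact hωne (by simpa using hs2.symm)
  have hs1 : s ^ (5 ^ 2 ^ m - 1) = 1 := by
    have := FiniteField.pow_card_sub_one_eq_one s hsne
    rwa [hcard] at this
  have hm22 : 5 ^ 2 ^ m - 1 = 2 ^ (m + 2) * u := by omega
  have hcontra : (1 : F) = -1 := by
    calc (1 : F) = s ^ (2 ^ (m + 2) * u) := by rw [← hm22, hs1]
    _ = ((s ^ 2) ^ (2 ^ (m + 1))) ^ u := by rw [← pow_mul, ← pow_mul]; congr 1; ring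
    _ = (-1 : F) ^ u := by rw [hs2, hωpow]
    _ = -1 := hu.neg_one_pow
  have h2 : ((2 : ℤ) : F) = 0 := by push_cast; linear_combination hcontra
  rw [CharP.intCast_eq_zero_iff F 5 2] at h2
  norm_num at h2

lemma dvd_of_C_mul {M h : ℤ[X]} (c : ℤ) (hc : c ≠ 0) (hM : M.Monic)
    (hd : M ∣ C c * h) : M ∣ h := by
  have hmap : M.map (Int.castRingHom ℚ) ∣ C ((c : ℚ)) * h.map (Int.castRingHom ℚ) := by
    have := Polynomial.map_dvd (Int.castRingHom ℚ) hd
    rwa [Polynomial.map_mul, Polynomial.map_C] at this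
  have hcne : ((c : ℚ)) ≠ 0 := by exact_mod_cast hc
  have h2 : h.map (Int.castRingHom ℚ) =
      C ((c : ℚ))⁻¹ * (C ((c : ℚ)) * h.map (Int.castRingHom ℚ)) := by
    rw [← mul_assoc, ← C_mul, inv_mul_cancel₀ hcne, C_1, one_mul]
  have : M.map (Int.castRingHom ℚ) ∣ h.map (Int.castRingHom ℚ) := by
    rw [h2]
    exact Dvd.dvd.mul_left hmap _
  exact (map_dvd_map (Int.castRingHom ℚ) (by exact Int.cast_injective) hM).mp this

lemma squarefree_Mbar (m : ℕ) : Squarefree (X ^ (2 ^ (m + 1)) + 1 : (ZMod 5)[X]) := by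
  have hn : ((2 ^ (m + 1) : ℕ) : ZMod 5) ≠ 0 := by
    push_cast
    exact pow_ne_zero _ (by decide : (2 : ZMod 5) ≠ 0)
  have hsep := separable_X_pow_sub_C (F := ZMod 5) (n := 2 ^ (m + 1)) (-1) hn (by norm_num)
  rw [map_neg, map_one, sub_neg_eq_add] at hsep
  exact hsep.squarefree

lemma half_step (m : ℕ) {p s : ℤ[X]}
    (h : (X ^ (2 ^ (m + 1)) + 1 : ℤ[X]) ∣ p ^ 2 + 5 * s) :
    ∃ p₂ : ℤ[X], (X ^ (2 ^ (m + 1)) + 1 : ℤ[X]) ∣ 5 * p₂ ^ 2 + s := by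
  set M : ℤ[X] := X ^ (2 ^ (m + 1)) + 1 with hMdef
  have h50 : (5 : (ZMod 5)[X]) = 0 := by
    have h5z : (5 : ZMod 5) = 0 := by decide
    rw [← map_ofNat (C : ZMod 5 →+* (ZMod 5)[X]) 5, h5z, map_zero]
  have hmapM : M.map (Int.castRingHom (ZMod 5)) = X ^ (2 ^ (m + 1)) + 1 := by
    simp [hMdef]
  have h1 : (X ^ (2 ^ (m + 1)) + 1 : (ZMod 5)[X]) ∣ (p.map (Int.castRingHom (ZMod 5))) ^ 2 := by
    have := Polynomial.map_dvd (Int.castRingHom (ZMod 5)) h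
    rwa [hmapM, Polynomial.map_add, Polynomial.map_mul, Polynomial.map_pow,
      Polynomial.map_ofNat, h50, zero_mul, add_zero] at this
  have h2 : (X ^ (2 ^ (m + 1)) + 1 : (ZMod 5)[X]) ∣ p.map (Int.castRingHom (ZMod 5)) :=
    (squarefree_Mbar m).isRadical 2 _ h1
  obtain ⟨w, hw⟩ := h2
  obtain ⟨W, hW⟩ := Polynomial.map_surjective (Int.castRingHom (ZMod 5)) (fun x => ZMod.intCast_surjective x) w
  have hdvd5 : C (5 : ℤ) ∣ p - M * W := by
    rw [C_dvd_iff_dvd_coeff]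
    intro i
    have hmap0 : (p - M * W).map (Int.castRingHom (ZMod 5)) = 0 := by
      rw [Polynomial.map_sub, Polynomial.map_mul, hmapM, hW, ← hw, sub_self]
    have := congrArg (fun q => Polynomial.coeff q i) hmap0
    simp only [Polynomial.coeff_map, Polynomial.coeff_zero] at this
    exact_mod_cast (ZMod.intCast_zmod_eq_zero_iff_dvd _ 5).mp this
  rw [show C (5:ℤ) = (5 : ℤ[X]) from map_ofNat C 5] at hdvd5
  obtain ⟨p₂, hp₂⟩ := hdvd5
  have hp : p = M * W + 5 * p₂ := by linear_combination hp₂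
  refine ⟨p₂, ?_⟩
  have key : p ^ 2 + 5 * s = M * (M * W ^ 2 + 10 * W * p₂) + 5 * (5 * p₂ ^ 2 + s) := by
    rw [hp]; ring
  have h3 : M ∣ 5 * (5 * p₂ ^ 2 + s) := by
    have := dvd_sub (key ▸ h) (Dvd.dvd.mul_right (dvd_refl M) (M * W ^ 2 + 10 * W * p₂))
    simpa using this
  rw [show (5 : ℤ[X]) = C (5 : ℤ) from (map_ofNat C 5).symm] at h3
  exact dvd_of_C_mul 5 (by norm_num) (Mmonic m) h3

lemma no_sol (m : ℕ) (d : ℤ) (hd : d ≠ 0) (A B : ℤ[X]) :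
    ¬ (X ^ (2 ^ (m + 1)) + 1 : ℤ[X]) ∣ A ^ 2 - 5 * B ^ 2 - C (d ^ 2) * X := by
  suffices H : ∀ k, ∀ d : ℤ, d.natAbs = k → d ≠ 0 → ∀ A B : ℤ[X],
      ¬ (X ^ (2 ^ (m + 1)) + 1 : ℤ[X]) ∣ A ^ 2 - 5 * B ^ 2 - C (d ^ 2) * X by
    exact H _ d rfl hd A B
  intro k
  induction k using Nat.strong_induction_on with
  | _ k ih =>
    intro d hdk hd A B hdvd
    by_cases h5 : (5 : ℤ) ∣ d
    · obtain ⟨e, rfl⟩ := h5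
      have he : e ≠ 0 := by rintro rfl; simp at hd
      -- first half step
      have hstep1 : (X ^ (2 ^ (m + 1)) + 1 : ℤ[X]) ∣
          A ^ 2 + 5 * (-B ^ 2 - 5 * (C (e ^ 2) * X)) := by
        have : A ^ 2 - 5 * B ^ 2 - C ((5 * e) ^ 2) * X
            = A ^ 2 + 5 * (-B ^ 2 - 5 * (C (e ^ 2) * X)) := by
          simp only [map_pow, map_mul, map_ofNat]
          ring
        rwa [this] at hdvd
      obtain ⟨A₂, hA₂⟩ := half_step m hstep1
      have hstep2 : (X ^ (2 ^ (m + 1)) + 1 : ℤ[X]) ∣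
          B ^ 2 + 5 * (-A₂ ^ 2 + C (e ^ 2) * X) := by
        have heq : B ^ 2 + 5 * (-A₂ ^ 2 + C (e ^ 2) * X)
            = -(5 * A₂ ^ 2 + (-B ^ 2 - 5 * (C (e ^ 2) * X))) := by ring
        rw [heq]
        exact dvd_neg.mpr hA₂
      obtain ⟨B₂, hB₂⟩ := half_step m hstep2
      have hfinal : (X ^ (2 ^ (m + 1)) + 1 : ℤ[X]) ∣
          A₂ ^ 2 - 5 * B₂ ^ 2 - C (e ^ 2) * X := by
        have heq : A₂ ^ 2 - 5 * B₂ ^ 2 - C (e ^ 2) * X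
            = -(5 * B₂ ^ 2 + (-A₂ ^ 2 + C (e ^ 2) * X)) := by ring
        rw [heq]
        exact dvd_neg.mpr hB₂
      have hlt : e.natAbs < k := by
        subst hdk
        have h1 : e.natAbs ≠ 0 := Int.natAbs_ne_zero.mpr he
        rw [Int.natAbs_mul, show (5 : ℤ).natAbs = 5 from rfl]
        omega
      exact ih e.natAbs hlt e rfl he A₂ B₂ hfinal
    · exact base_case m d h5 A B hdvd

end Auxiliary

/-- `ζ_{2^{m+2}}` is not a relative norm of `𝕂/𝔽` with
`𝔽 = ℚ(ζ_{2^{m+2}})` and `𝕂 = 𝔽(√5)`: there is no `x = y + z√5 ∈ 𝕂` (with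
`y, z ∈ 𝔽`) whose norm `y² - 5z²` equals `ζ_{2^{m+2}}`. -/
theorem zeta_not_norm (m : ℕ) :
    ¬ ∃ y z : ℂ, y ∈ ℚ⟮zeta2m m⟯ ∧ z ∈ ℚ⟮zeta2m m⟯ ∧
      y ^ 2 - 5 * z ^ 2 = zeta2m m := by
  intro h
  obtain ⟨d, A, B, hd, hdvd⟩ := int_reduction m h
  exact no_sol m d hd A B hdvd
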